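/- In a group G generated by four involutions r0, r0', r1, r1' with r0 * r0' * r1 * r1' = 1, every element of G can be written in the form r0^i * (r0*r0')^m * (r0*r1')^n with i ∈ {0,1} and m, n ∈ ℤ. -/
import Mathlib

private lemma stmt8_aux {G : Type*} [Group G] (r a b : G) (S : Set G)
    (hr : r * r = 1) (hcomm : a * b = b * a)
    (hra : r * a * r = a⁻¹) (hrb : r * b * r = b⁻¹)
    (hmem : ∀ x ∈ S, ∃ (i : ℕ) (m n : ℤ), i ≤ 1 ∧ x = r ^ i * a ^ m * b ^ n) :
    ∀ g ∈ Subgroup.closure S, ∃ (i : ℕ) (m n : ℤ), i ≤ 1 ∧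
      g = r ^ i * a ^ m * b ^ n := by
  have hri : r⁻¹ = r := inv_eq_of_mul_eq_one_right hr
  have hC : Commute a b := hcomm
  have hcz : ∀ (m n : ℤ), a ^ m * b ^ n = b ^ n * a ^ m := fun m n => (hC.zpow_zpow m n)
  have hmove : ∀ x : G, r * x * r = x⁻¹ → ∀ m : ℤ, x ^ m * r = r * x ^ (-m) := by
    intro x hx m
    have hz : r * x ^ m * r = x ^ (-m) := by
      calc r * x ^ m * r = r * x ^ m * r⁻¹ := by rw [hri]
        _ = (r * x * r⁻¹) ^ m := by
              have := map_zpow (MulAut.conj r) x m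
              simp only [MulAut.conj_apply, hri] at this; rw [hri, this]
        _ = (r * x * r) ^ m := by rw [hri]
        _ = (x⁻¹) ^ m := by rw [hx]
        _ = x ^ (-m) := by rw [inv_zpow, ← zpow_neg]
    calc x ^ m * r = r * (r * x ^ m * r) := by
          rw [← mul_assoc, ← mul_assoc, hr, one_mul]
      _ = r * x ^ (-m) := by rw [hz]
  have hma := hmove a hra
  have hmb := hmove b hrb
  intro g hg
  induction hg using Subgroup.closure_induction with
  | mem x hx => exact hmem x hx
  | one => exact ⟨0, 0, 0, Nat.zero_le 1, by simp⟩
  | mul x y hx hy ihx ihy =>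
    obtain ⟨i, m, n, hi, hxe⟩ := ihx
    obtain ⟨j, p, q, hj, hye⟩ := ihy
    subst hxe hye
    interval_cases j
    · refine ⟨i, m + p, n + q, hi, ?_⟩
      rw [zpow_add, zpow_add, pow_zero, one_mul]
      calc r ^ i * a ^ m * b ^ n * (a ^ p * b ^ q)
          = r ^ i * a ^ m * (b ^ n * a ^ p) * b ^ q := by group
        _ = r ^ i * a ^ m * (a ^ p * b ^ n) * b ^ q := by rw [hcz]
        _ = r ^ i * (a ^ m * a ^ p) * (b ^ n * b ^ q) := by group
    · have key : a ^ m * b ^ n * r = r * (a ^ (-m) * b ^ (-n)) := by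
        rw [mul_assoc, hmb, ← mul_assoc, hma, mul_assoc]
      rw [pow_one]
      interval_cases i
      · refine ⟨1, -m + p, -n + q, le_refl 1, ?_⟩
        rw [zpow_add, zpow_add, pow_zero, one_mul, pow_one]
        calc a ^ m * b ^ n * (r * a ^ p * b ^ q)
            = (a ^ m * b ^ n * r) * a ^ p * b ^ q := by group
          _ = r * (a ^ (-m) * b ^ (-n)) * a ^ p * b ^ q := by rw [key]
          _ = r * a ^ (-m) * (b ^ (-n) * a ^ p) * b ^ q := by group
          _ = r * a ^ (-m) * (a ^ p * b ^ (-n)) * b ^ q := by rw [hcz]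
          _ = r * (a ^ (-m) * a ^ p) * (b ^ (-n) * b ^ q) := by group
      · refine ⟨0, -m + p, -n + q, Nat.zero_le 1, ?_⟩
        rw [zpow_add, zpow_add, pow_zero, one_mul, pow_one]
        calc r * a ^ m * b ^ n * (r * a ^ p * b ^ q)
            = r * (a ^ m * b ^ n * r) * a ^ p * b ^ q := by group
          _ = r * (r * (a ^ (-m) * b ^ (-n))) * a ^ p * b ^ q := by rw [key]
          _ = (r * r) * (a ^ (-m) * (b ^ (-n) * a ^ p) * b ^ q) := by group
          _ = a ^ (-m) * (b ^ (-n) * a ^ p) * b ^ q := by rw [hr, one_mul]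
          _ = a ^ (-m) * (a ^ p * b ^ (-n)) * b ^ q := by rw [hcz]
          _ = (a ^ (-m) * a ^ p) * (b ^ (-n) * b ^ q) := by group
  | inv x hx ihx =>
    obtain ⟨i, m, n, hi, hxe⟩ := ihx
    subst hxe
    interval_cases i
    · refine ⟨0, -m, -n, Nat.zero_le 1, ?_⟩
      rw [pow_zero, one_mul, one_mul, mul_inv_rev, ← zpow_neg, ← zpow_neg, hcz]
    · refine ⟨1, m, n, le_refl 1, ?_⟩
      rw [pow_one, mul_inv_rev, mul_inv_rev, ← zpow_neg, ← zpow_neg, hri]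
      calc b ^ (-n) * (a ^ (-m) * r)
          = b ^ (-n) * (r * a ^ m) := by rw [hma, neg_neg]
        _ = (b ^ (-n) * r) * a ^ m := by rw [mul_assoc]
        _ = r * b ^ n * a ^ m := by rw [hmb, neg_neg, mul_assoc]
        _ = r * (a ^ m * b ^ n) := by rw [mul_assoc, hcz]
        _ = r * a ^ m * b ^ n := by rw [mul_assoc]

theorem stmt8 {G : Type*} [Group G] (r₀ r₀' r₁ r₁' : G)
    (hgen : Subgroup.closure {r₀, r₀', r₁, r₁'} = ⊤)
    (h0 : r₀ * r₀ = 1) (h0' : r₀' * r₀' = 1)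
    (h1 : r₁ * r₁ = 1) (h1' : r₁' * r₁' = 1)
    (hrel : r₀ * r₀' * r₁ * r₁' = 1) :
    ∀ g : G, ∃ (i : ℕ) (m n : ℤ), i ≤ 1 ∧
      g = r₀ ^ i * (r₀ * r₀') ^ m * (r₀ * r₁') ^ n := by
  have hi0 : r₀⁻¹ = r₀ := inv_eq_of_mul_eq_one_right h0
  have hi0' : r₀'⁻¹ = r₀' := inv_eq_of_mul_eq_one_right h0'
  have hi1 : r₁⁻¹ = r₁ := inv_eq_of_mul_eq_one_right h1
  have hi1' : r₁'⁻¹ = r₁' := inv_eq_of_mul_eq_one_right h1'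
  have hainv : (r₀ * r₀')⁻¹ = r₀' * r₀ := by rw [mul_inv_rev, hi0, hi0']
  have hbinv : (r₀ * r₁')⁻¹ = r₁' * r₀ := by rw [mul_inv_rev, hi0, hi1']
  -- r₀ * r₀' = r₁' * r₁
  have ha2 : r₀ * r₀' = r₁' * r₁ := by
    have h' : (r₀ * r₀') * (r₁ * r₁') = 1 := by rw [← mul_assoc]; exact hrel
    have := eq_inv_of_mul_eq_one_left h'
    rw [mul_inv_rev, hi1, hi1'] at this
    exact this
  have hra : r₀ * (r₀ * r₀') * r₀ = (r₀ * r₀')⁻¹ := by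
    rw [hainv]
    calc r₀ * (r₀ * r₀') * r₀ = (r₀ * r₀) * (r₀' * r₀) := by group
      _ = r₀' * r₀ := by rw [h0, one_mul]
  have hrb : r₀ * (r₀ * r₁') * r₀ = (r₀ * r₁')⁻¹ := by
    rw [hbinv]
    calc r₀ * (r₀ * r₁') * r₀ = (r₀ * r₀) * (r₁' * r₀) := by group
      _ = r₁' * r₀ := by rw [h0, one_mul]
  have hcomm : (r₀ * r₀') * (r₀ * r₁') = (r₀ * r₁') * (r₀ * r₀') := by
    have key : (r₀ * r₁') * (r₀ * r₀') * (r₀ * r₁')⁻¹ = r₀ * r₀' := by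
      calc (r₀ * r₁') * (r₀ * r₀') * (r₀ * r₁')⁻¹
          = (r₀ * r₁') * (r₁' * r₁) * (r₁' * r₀) := by rw [ha2, hbinv]
        _ = r₀ * ((r₁' * r₁') * (r₁ * r₁')) * r₀ := by group
        _ = r₀ * (r₁ * r₁') * r₀ := by rw [h1', one_mul]
        _ = r₀ * ((r₁' * r₁)⁻¹) * r₀ := by rw [mul_inv_rev, hi1, hi1']
        _ = r₀ * ((r₀ * r₀')⁻¹) * r₀ := by rw [ha2]
        _ = r₀ * (r₀' * r₀) * r₀ := by rw [hainv]
        _ = (r₀ * r₀') * (r₀ * r₀) := by group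
        _ = r₀ * r₀' := by rw [h0, mul_one]
    have : (r₀ * r₀') * (r₀ * r₁') = ((r₀ * r₁') * (r₀ * r₀') * (r₀ * r₁')⁻¹) * (r₀ * r₁') := by
      rw [key]
    rw [this]; group
  intro g
  refine stmt8_aux r₀ (r₀ * r₀') (r₀ * r₁') _ h0 hcomm hra hrb ?_ g
    (hgen ▸ Subgroup.mem_top g)
  intro x hx
  rcases hx with h | h | h | h
  · exact ⟨1, 0, 0, le_refl 1, by simp [h]⟩
  · refine ⟨1, 1, 0, le_refl 1, ?_⟩
    rw [h, pow_one, zpow_one, zpow_zero, mul_one, ← mul_assoc, h0, one_mul]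
  · refine ⟨1, 1, 1, le_refl 1, ?_⟩
    rw [h, pow_one, zpow_one, zpow_one]
    -- r₁ = r₀ * (r₀ * r₀') * (r₀ * r₁') = r₀' * r₀ * r₁'
    have h3 : r₀ * r₀' * r₁ = r₁'⁻¹ := eq_inv_of_mul_eq_one_left hrel
    rw [hi1'] at h3
    calc r₁ = (r₀' * r₀') * r₁ := by rw [h0', one_mul]
      _ = r₀' * ((r₀ * r₀) * (r₀' * r₁)) := by rw [h0, one_mul, mul_assoc]
      _ = r₀' * r₀ * (r₀ * r₀' * r₁) := by group
      _ = r₀' * r₀ * r₁' := by rw [h3]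
      _ = (r₀ * r₀) * r₀' * r₀ * r₁' := by rw [h0, one_mul]
      _ = r₀ * (r₀ * r₀') * (r₀ * r₁') := by group
  · refine ⟨1, 0, 1, le_refl 1, ?_⟩
    rw [h, pow_one, zpow_zero, mul_one, zpow_one, ← mul_assoc, h0, one_mul]
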